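/- Suppose α₁, …, αₙ ∈ (-1,1) and let α = α₁ + ⋯ + αₙ. Then the iterated integral of ∏ᵢ₌₁ⁿ (rᵢ - r_{i-1})^{αᵢ} over the simplex {0 < r₁ < ⋯ < rₙ < t} (with r₀ = 0) equals (∏ᵢ₌₁ⁿ Γ(αᵢ + 1)) · t^{α+n} / Γ(α + n + 1). -/

import Mathlib

open MeasureTheory Real Set
open scoped ENNReal

noncomputable def simFun (n : ℕ) (α : Fin n → ℝ) (r : Fin n → ℝ) : ℝ :=
  ∏ i : Fin n,
    (r i - (if h : (i : ℕ) = 0 then 0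
      else r ⟨(i : ℕ) - 1, Nat.lt_of_le_of_lt (Nat.sub_le _ _) i.isLt⟩)) ^ (α i)

def simSet (n : ℕ) (t : ℝ) : Set (Fin n → ℝ) :=
  {r | (∀ i, 0 < r i) ∧ (∀ i j : Fin n, i < j → r i < r j) ∧ (∀ i, r i < t)}

lemma simSet_measurable (n : ℕ) (t : ℝ) : MeasurableSet (simSet n t) := by
  have h1 : MeasurableSet {r : Fin n → ℝ | ∀ i, 0 < r i} := by
    rw [show {r : Fin n → ℝ | ∀ i, 0 < r i} = ⋂ i, {r | 0 < r i} by ext r; simp]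
    exact MeasurableSet.iInter fun i =>
      measurableSet_lt measurable_const (measurable_pi_apply i)
  have h2 : MeasurableSet {r : Fin n → ℝ | ∀ i j : Fin n, i < j → r i < r j} := by
    rw [show {r : Fin n → ℝ | ∀ i j : Fin n, i < j → r i < r j}
      = ⋂ i, ⋂ j, ⋂ (_ : i < j), {r | r i < r j} by ext r; simp]
    exact MeasurableSet.iInter fun i => MeasurableSet.iInter fun j =>
      MeasurableSet.iInter fun _ =>
        measurableSet_lt (measurable_pi_apply i) (measurable_pi_apply j)
  have h3 : MeasurableSet {r : Fin n → ℝ | ∀ i, r i < t} := by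
    rw [show {r : Fin n → ℝ | ∀ i, r i < t} = ⋂ i, {r | r i < t} by ext r; simp]
    exact MeasurableSet.iInter fun i =>
      measurableSet_lt (measurable_pi_apply i) measurable_const
  have : simSet n t = {r : Fin n → ℝ | ∀ i, 0 < r i}
      ∩ ({r | ∀ i j : Fin n, i < j → r i < r j} ∩ {r | ∀ i, r i < t}) := by
    rfl
  rw [this]
  exact h1.inter (h2.inter h3)

lemma simFun_measurable (n : ℕ) (α : Fin n → ℝ) : Measurable (simFun n α) := by
  apply Finset.measurable_prod
  intro i _
  by_cases h : (i : ℕ) = 0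
  · simp only [dif_pos h]
    fun_prop
  · simp only [dif_neg h]
    fun_prop

lemma simFun_pos {n : ℕ} {α : Fin n → ℝ} {t : ℝ} {r : Fin n → ℝ} (hr : r ∈ simSet n t) :
    0 < simFun n α r := by
  obtain ⟨h1, h2, _⟩ := hr
  apply Finset.prod_pos
  intro i _
  apply Real.rpow_pos_of_pos
  by_cases h : (i : ℕ) = 0
  · simp only [dif_pos h, sub_zero]; exact h1 i
  · simp only [dif_neg h, sub_pos]
    exact h2 _ i (by
      simp only [Fin.lt_def]
      exact Nat.sub_lt (Nat.pos_of_ne_zero h) one_pos)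

lemma cons_mem_simSet_iff {n : ℕ} {t s : ℝ} {y : Fin n → ℝ} :
    Fin.cons s y ∈ simSet (n+1) t ↔
      0 < s ∧ s < t ∧ (fun j => y j - s) ∈ simSet n (t - s) := by
  constructor
  · rintro ⟨h1, h2, h3⟩
    have hs : 0 < s := by simpa using h1 0
    have hst : s < t := by simpa using h3 0
    refine ⟨hs, hst, fun j => ?_, fun i j hij => ?_, fun j => ?_⟩
    · have := h2 0 j.succ (Fin.succ_pos j)
      simp only [Fin.cons_zero, Fin.cons_succ] at this
      simpa [sub_pos] using this
    · have := h2 i.succ j.succ (by simpa [Fin.succ_lt_succ_iff] using hij)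
      simp only [Fin.cons_succ] at this
      simpa [sub_lt_sub_iff_right] using this
    · have := h3 j.succ
      simp only [Fin.cons_succ] at this
      simpa [sub_lt_sub_iff_right] using this
  · rintro ⟨hs, hst, hy1, hy2, hy3⟩
    refine ⟨fun i => ?_, fun i j hij => ?_, fun i => ?_⟩
    · refine Fin.cases ?_ (fun j => ?_) i
      · simpa using hs
      · simp only [Fin.cons_succ]
        have := hy1 j
        simp only [sub_pos] at this
        linarith
    · rcases Fin.eq_zero_or_eq_succ j with rfl | ⟨j', rfl⟩
      · exact absurd hij (Fin.not_lt_zero i)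
      · rcases Fin.eq_zero_or_eq_succ i with rfl | ⟨i', rfl⟩
        · simp only [Fin.cons_zero, Fin.cons_succ]
          have := hy1 j'
          simp only [sub_pos] at this
          linarith
        · simp only [Fin.cons_succ]
          have := hy2 i' j' (by simpa [Fin.succ_lt_succ_iff] using hij)
          simpa [sub_lt_sub_iff_right] using this
    · refine Fin.cases ?_ (fun j => ?_) i
      · simpa using hst
      · simp only [Fin.cons_succ]
        have := hy3 j
        simp only [sub_lt_sub_iff_right] at this
        linarith
  
lemma simFun_cons {n : ℕ} (α : Fin (n+1) → ℝ) (s : ℝ) (y : Fin n → ℝ) :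
    simFun (n+1) α (Fin.cons s y)
      = s ^ α 0 * simFun n (fun j => α j.succ) (fun j => y j - s) := by
  rw [simFun, simFun, Fin.prod_univ_succ]
  congr 1
  · simp
  · refine Finset.prod_congr rfl fun j _ => ?_
    congr 1
    by_cases h : (j : ℕ) = 0
    · have hj0 : (⟨(j.succ : ℕ) - 1, Nat.lt_of_le_of_lt (Nat.sub_le _ _) j.succ.isLt⟩ : Fin (n+1))
          = 0 := by
        ext; simp [h]
      rw [dif_neg (by simp : ¬((j.succ : ℕ) = 0)), dif_pos h, hj0]
      simp [Fin.cons_succ, Fin.cons_zero]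
    · have hj1 : (⟨(j.succ : ℕ) - 1, Nat.lt_of_le_of_lt (Nat.sub_le _ _) j.succ.isLt⟩ : Fin (n+1))
          = Fin.succ ⟨(j : ℕ) - 1, Nat.lt_of_le_of_lt (Nat.sub_le _ _) j.isLt⟩ := by
        ext
        simp [Fin.val_succ, Nat.succ_sub_one, Nat.sub_add_cancel (Nat.one_le_iff_ne_zero.mpr h)]
      rw [dif_neg (by simp : ¬((j.succ : ℕ) = 0)), dif_neg h, hj1]
      simp only [Fin.cons_succ]
      ring


lemma beta_real_eq (a b : ℝ) (ha : -1 < a) (hb : -1 < b) {t : ℝ} (ht : 0 < t) :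
    ∫ s in Ioo (0:ℝ) t, s ^ a * (t - s) ^ b
      = Real.Gamma (a+1) * Real.Gamma (b+1) / Real.Gamma (a+b+2) * t ^ (a+b+1) := by
  have ha' : (0:ℝ) < a + 1 := by linarith
  have hb' : (0:ℝ) < b + 1 := by linarith
  have hG : Complex.Gamma ((a:ℂ)+1) * Complex.Gamma ((b:ℂ)+1)
      = Complex.Gamma ((a:ℂ)+1+((b:ℂ)+1)) * Complex.betaIntegral ((a:ℂ)+1) ((b:ℂ)+1) :=
    Complex.Gamma_mul_Gamma_eq_betaIntegral (by simpa using ha') (by simpa using hb')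
  have hsc := Complex.betaIntegral_scaled ((a:ℂ)+1) ((b:ℂ)+1) ht
  have key : ((∫ s in Ioo (0:ℝ) t, s ^ a * (t - s) ^ b : ℝ) : ℂ)
      = (t:ℂ) ^ ((a:ℂ)+1+((b:ℂ)+1)-1) * Complex.betaIntegral ((a:ℂ)+1) ((b:ℂ)+1) := by
    rw [← hsc, intervalIntegral.integral_of_le ht.le,
      ← MeasureTheory.integral_Ioc_eq_integral_Ioo]
    refine integral_ofReal.symm.trans <| setIntegral_congr_fun measurableSet_Ioc fun x hx => ?_
    have hx0 : (0:ℝ) ≤ x := hx.1.le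
    have hx1 : (0:ℝ) ≤ t - x := by linarith [hx.2]
    rw [add_sub_cancel_right, add_sub_cancel_right, ← Complex.ofReal_cpow hx0,
      show (t:ℂ) - (x:ℂ) = ((t-x:ℝ):ℂ) by push_cast; ring, ← Complex.ofReal_cpow hx1]
    norm_cast
  have hGt : Complex.Gamma ((a:ℂ)+1+((b:ℂ)+1)) = (Real.Gamma (a+b+2) : ℂ) := by
    rw [show (a:ℂ)+1+((b:ℂ)+1) = ((a+b+2 : ℝ) : ℂ) by push_cast; ring, Complex.Gamma_ofReal]
  have hGa : Complex.Gamma ((a:ℂ)+1) = (Real.Gamma (a+1) : ℂ) := by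
    rw [show (a:ℂ)+1 = ((a+1 : ℝ) : ℂ) by push_cast; ring, Complex.Gamma_ofReal]
  have hGb : Complex.Gamma ((b:ℂ)+1) = (Real.Gamma (b+1) : ℂ) := by
    rw [show (b:ℂ)+1 = ((b+1 : ℝ) : ℂ) by push_cast; ring, Complex.Gamma_ofReal]
  have hGne : (Real.Gamma (a+b+2) : ℂ) ≠ 0 := by
    simp only [ne_eq, Complex.ofReal_eq_zero]
    exact (Real.Gamma_pos_of_pos (by linarith)).ne'
  have hbeta : Complex.betaIntegral ((a:ℂ)+1) ((b:ℂ)+1)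
      = (Real.Gamma (a+1) : ℂ) * (Real.Gamma (b+1) : ℂ) / (Real.Gamma (a+b+2) : ℂ) := by
    rw [eq_div_iff hGne]
    rw [hGt, hGa, hGb] at hG
    linear_combination hG.symm
  rw [hbeta] at key
  have htc : (t:ℂ) ^ ((a:ℂ)+1+((b:ℂ)+1)-1) = ((t ^ (a+b+1) : ℝ) : ℂ) := by
    rw [show (a:ℂ)+1+((b:ℂ)+1)-1 = ((a+b+1:ℝ):ℂ) by push_cast; ring, Complex.ofReal_cpow ht.le]
  rw [htc] at key
  have key' : (∫ s in Ioo (0:ℝ) t, s ^ a * (t - s) ^ b)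
      = t ^ (a+b+1) * (Real.Gamma (a+1) * Real.Gamma (b+1) / Real.Gamma (a+b+2)) := by
    exact_mod_cast key
  rw [key']; ring

lemma beta_integrable (a b : ℝ) (ha : -1 < a) (hb : -1 < b) {t : ℝ} (ht : 0 < t) :
    IntegrableOn (fun s => s ^ a * (t - s) ^ b) (Ioo (0:ℝ) t) := by
  have hconv := Complex.betaIntegral_convergent (u := (a:ℂ)+1) (v := (b:ℂ)+1)
    (by simpa using show (0:ℝ) < a + 1 by linarith) (by simpa using show (0:ℝ) < b + 1 by linarith)
  have h2 : IntervalIntegrable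
      (fun x => ((x/t : ℝ):ℂ) ^ ((a:ℂ)+1-1) * (1 - ((x/t:ℝ):ℂ)) ^ ((b:ℂ)+1-1)) volume 0 t := by
    have h := hconv.comp_mul_left (c := t⁻¹)
    have h0 : (0:ℝ)/t⁻¹ = 0 := by simp
    have h1 : (1:ℝ)/t⁻¹ = t := by field_simp
    rw [h0, h1] at h
    convert h using 2 with x
    rw [div_eq_inv_mul]
  have h3 : IntegrableOn
      (fun x => (((x/t : ℝ):ℂ) ^ ((a:ℂ)+1-1) * (1 - ((x/t:ℝ):ℂ)) ^ ((b:ℂ)+1-1)).re)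
      (Ioo (0:ℝ) t) := by
    have h := ((intervalIntegrable_iff_integrableOn_Ioc_of_le ht.le).mp h2).re
    have h' : IntegrableOn
      (fun x => (((x/t : ℝ):ℂ) ^ ((a:ℂ)+1-1) * (1 - ((x/t:ℝ):ℂ)) ^ ((b:ℂ)+1-1)).re)
      (Ioc (0:ℝ) t) := h
    exact h'.mono_set Ioo_subset_Ioc_self
  have h4 : IntegrableOn (fun s => (s/t) ^ a * (1 - s/t) ^ b) (Ioo (0:ℝ) t) := by
    refine IntegrableOn.congr_fun h3 (fun x hx => ?_) measurableSet_Ioo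
    have hx1' : x/t ≤ 1 := by rw [div_le_one ht]; exact hx.2.le
    have hx0 : (0:ℝ) ≤ x/t := by have := hx.1; positivity
    have hx1 : (0:ℝ) ≤ 1 - x/t := by linarith
    rw [add_sub_cancel_right, add_sub_cancel_right, ← Complex.ofReal_cpow hx0,
      show (1 : ℂ) - ((x/t:ℝ):ℂ) = ((1 - x/t : ℝ) : ℂ) by push_cast; ring,
      ← Complex.ofReal_cpow hx1, ← Complex.ofReal_mul, Complex.ofReal_re]
  have h5 : IntegrableOn (fun s => t^(a+b) * ((s/t) ^ a * (1 - s/t) ^ b)) (Ioo (0:ℝ) t) :=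
    h4.const_mul _
  refine IntegrableOn.congr_fun h5 (fun x hx => ?_) measurableSet_Ioo
  have hxt : (0:ℝ) ≤ 1 - x/t := by
    have : x/t ≤ 1 := by rw [div_le_one ht]; exact hx.2.le
    linarith
  have htne : t ^ a ≠ 0 := by positivity
  have htne' : t ^ b ≠ 0 := by positivity
  rw [show (1 - x/t) = (t-x)/t by field_simp, Real.div_rpow hx.1.le ht.le,
    Real.div_rpow (by linarith [hx.2] : (0:ℝ) ≤ t - x) ht.le, Real.rpow_add ht]
  field_simp

lemma sum_gt {n : ℕ} (hn : 1 ≤ n) (α : Fin n → ℝ) (hα : ∀ i, -1 < α i) :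
    -(n:ℝ) < ∑ i, α i := by
  have h : ∑ _i : Fin n, (-1 : ℝ) < ∑ i, α i := by
    refine Finset.sum_lt_sum_of_nonempty ?_ fun i _ => hα i
    exact ⟨⟨0, by omega⟩, Finset.mem_univ _⟩
  simpa using h

lemma simKey (n : ℕ) (hn : 1 ≤ n) : ∀ (α : Fin n → ℝ), (∀ i, -1 < α i) → ∀ t : ℝ, 0 < t →
    ∫⁻ r in simSet n t, ENNReal.ofReal (simFun n α r)
      = ENNReal.ofReal ((∏ i, Real.Gamma (α i + 1)) * t ^ ((∑ i, α i) + n)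
          / Real.Gamma ((∑ i, α i) + n + 1)) := by
  induction n, hn using Nat.le_induction with
  | base =>
    intro α hα t ht
    have hα0 : -1 < α 0 := hα 0
    set a := α 0 with ha
    have ha1 : (0:ℝ) < a + 1 := by linarith
    -- reduce to 1-dim integral
    set e := MeasurableEquiv.funUnique (Fin 1) ℝ with he
    have hmp : MeasurePreserving e volume volume := volume_preserving_funUnique (Fin 1) ℝ
    set g : (Fin 1 → ℝ) → ℝ≥0∞ :=
      (simSet 1 t).indicator (fun r => ENNReal.ofReal (simFun 1 α r)) with hgdef
    have hgm : Measurable g :=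
      ((simFun_measurable 1 α).ennreal_ofReal).indicator (simSet_measurable 1 t)
    have h1 : ∫⁻ r in simSet 1 t, ENNReal.ofReal (simFun 1 α r) = ∫⁻ r, g r :=
      (lintegral_indicator (simSet_measurable 1 t) _).symm
    have h2 : ∫⁻ r, g r = ∫⁻ x : ℝ, g (e.symm x) := ((hmp.symm e).lintegral_comp hgm).symm
    have hsymm : ∀ x : ℝ, e.symm x = fun _ : Fin 1 => x := by
      intro x; funext i; simp [he, MeasurableEquiv.funUnique, Equiv.funUnique]
    have hmem : ∀ x : ℝ, ((fun _ : Fin 1 => x) ∈ simSet 1 t) ↔ x ∈ Ioo (0:ℝ) t := by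
      intro x
      constructor
      · rintro ⟨p1, _, p3⟩; exact ⟨p1 0, p3 0⟩
      · rintro ⟨q1, q2⟩
        exact ⟨fun _ => q1, fun i j hij => by
          rw [Subsingleton.elim i j] at hij; exact absurd hij (lt_irrefl j),
          fun _ => q2⟩
    have hval : ∀ x : ℝ, simFun 1 α (fun _ : Fin 1 => x) = x ^ a := by
      intro x; simp [simFun, ha]
    have h3 : ∀ x : ℝ, g (e.symm x)
        = (Ioo (0:ℝ) t).indicator (fun x => ENNReal.ofReal (x ^ a)) x := by
      intro x
      rw [hsymm x, hgdef]
      by_cases hx : x ∈ Ioo (0:ℝ) t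
      · rw [Set.indicator_of_mem ((hmem x).mpr hx), Set.indicator_of_mem hx, hval]
      · rw [Set.indicator_of_notMem (fun hc => hx ((hmem x).mp hc)),
          Set.indicator_of_notMem hx]
    have h4 : ∫⁻ x : ℝ, g (e.symm x) = ∫⁻ x in Ioo (0:ℝ) t, ENNReal.ofReal (x ^ a) := by
      simp_rw [h3]
      exact lintegral_indicator measurableSet_Ioo _
    have hint : IntegrableOn (fun x : ℝ => x ^ a) (Ioo (0:ℝ) t) := by
      have := (intervalIntegral.intervalIntegrable_rpow' (r := a) (a := 0) (b := t) hα0)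
      exact ((intervalIntegrable_iff_integrableOn_Ioc_of_le ht.le).mp this).mono_set
        Ioo_subset_Ioc_self
    have h5 : ∫⁻ x in Ioo (0:ℝ) t, ENNReal.ofReal (x ^ a)
        = ENNReal.ofReal (∫ x in Ioo (0:ℝ) t, x ^ a) := by
      rw [← ofReal_integral_eq_lintegral_ofReal hint]
      filter_upwards [ae_restrict_mem measurableSet_Ioo] with x hx
      exact Real.rpow_nonneg hx.1.le a
    have h6 : ∫ x in Ioo (0:ℝ) t, x ^ a = t ^ (a + 1) / (a + 1) := by
      rw [← MeasureTheory.integral_Ioc_eq_integral_Ioo,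
        ← intervalIntegral.integral_of_le ht.le,
        integral_rpow (Or.inl hα0),
        Real.zero_rpow (by linarith : a + 1 ≠ 0), sub_zero]
    rw [h1, h2, h4, h5, h6]
    congr 1
    have hΓ : Real.Gamma (a + 1 + 1) = (a + 1) * Real.Gamma (a + 1) :=
      Real.Gamma_add_one (by linarith)
    have hΓpos : 0 < Real.Gamma (a + 1) := Real.Gamma_pos_of_pos ha1
    rw [Fin.sum_univ_one, Fin.prod_univ_one, ← ha]
    push_cast
    rw [hΓ]
    field_simp
  | succ n hn IH =>
    intro α hα t ht
    set α' : Fin n → ℝ := fun j => α j.succ with hα'def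
    have hα' : ∀ j, -1 < α' j := fun j => hα j.succ
    set β : ℝ := ∑ j, α' j with hβ
    set γ : ℝ := β + n with hγ
    have hγgt : -1 < γ := by
      have := sum_gt hn α' hα'
      rw [hγ, hβ]; linarith
    set C : ℝ := ∏ j, Real.Gamma (α' j + 1) with hC
    have hCpos : 0 < C := Finset.prod_pos fun j _ =>
      Real.Gamma_pos_of_pos (by linarith [hα' j])
    have hΓγpos : 0 < Real.Gamma (γ + 1) := Real.Gamma_pos_of_pos (by linarith)
    set K : ℝ := C / Real.Gamma (γ + 1) with hK
    have hKpos : 0 < K := div_pos hCpos hΓγpos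
    set e := MeasurableEquiv.piFinSuccAbove (fun _ : Fin (n+1) => ℝ) 0 with he
    have hmp : MeasurePreserving e volume volume :=
      volume_preserving_piFinSuccAbove (fun _ : Fin (n+1) => ℝ) 0
    set g : (Fin (n+1) → ℝ) → ℝ≥0∞ :=
      (simSet (n+1) t).indicator (fun r => ENNReal.ofReal (simFun (n+1) α r)) with hgdef
    have hgm : Measurable g :=
      ((simFun_measurable (n+1) α).ennreal_ofReal).indicator (simSet_measurable (n+1) t)
    have h1 : ∫⁻ r in simSet (n+1) t, ENNReal.ofReal (simFun (n+1) α r) = ∫⁻ r, g r :=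
      (lintegral_indicator (simSet_measurable (n+1) t) _).symm
    have h2 : ∫⁻ r, g r = ∫⁻ p : ℝ × (Fin n → ℝ), g (e.symm p) :=
      ((hmp.symm e).lintegral_comp hgm).symm
    have h3 : ∫⁻ p : ℝ × (Fin n → ℝ), g (e.symm p)
        = ∫⁻ s : ℝ, ∫⁻ y : Fin n → ℝ, g (e.symm (s, y)) :=
      lintegral_prod _ ((hgm.comp e.symm.measurable).aemeasurable)
    have hcons : ∀ (s : ℝ) (y : Fin n → ℝ), e.symm (s, y) = Fin.cons s y := by
      intro s y
      rw [he, MeasurableEquiv.piFinSuccAbove_symm_apply]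
      exact Fin.insertNth_zero' s y
    -- inner integral computation
    have hinner : ∀ s : ℝ, (∫⁻ y : Fin n → ℝ, g (e.symm (s, y)))
        = (Ioo (0:ℝ) t).indicator
            (fun s => ENNReal.ofReal (K * (s ^ α 0 * (t - s) ^ γ))) s := by
      intro s
      by_cases hs : s ∈ Ioo (0:ℝ) t
      · rw [Set.indicator_of_mem hs]
        have hts : 0 < t - s := by have := hs.2; linarith
        have hstep : ∀ y : Fin n → ℝ, g (e.symm (s, y))
            = ENNReal.ofReal (s ^ α 0) *
              (simSet n (t - s)).indicator (fun z => ENNReal.ofReal (simFun n α' z))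
                (y - fun _ => s) := by
          intro y
          rw [hcons, hgdef]
          have hyz : (fun j => y j - s) = y - fun _ => s := by funext j; simp
          by_cases hy : (fun j => y j - s) ∈ simSet n (t - s)
          · rw [Set.indicator_of_mem
                (cons_mem_simSet_iff.mpr ⟨hs.1, hs.2, hy⟩),
              simFun_cons, ← hyz, Set.indicator_of_mem hy,
              ENNReal.ofReal_mul (Real.rpow_nonneg hs.1.le _)]
          · rw [Set.indicator_of_notMem (fun hc => hy (cons_mem_simSet_iff.mp hc).2.2),
              ← hyz, Set.indicator_of_notMem hy, mul_zero]
        simp_rw [hstep]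
        have hm1 : Measurable fun y : Fin n → ℝ =>
            ((simSet n (t - s)).indicator fun z => ENNReal.ofReal (simFun n α' z))
              (y - fun _ => s) := by
          exact (((simFun_measurable n α').ennreal_ofReal).indicator
            (simSet_measurable n (t - s))).comp (measurable_id.sub_const _)
        rw [lintegral_const_mul _ hm1]
        rw [lintegral_sub_right_eq_self
          ((simSet n (t-s)).indicator fun z => ENNReal.ofReal (simFun n α' z)) (fun _ => s)]
        rw [lintegral_indicator (simSet_measurable n (t-s)), IH α' hα' (t - s) hts]
        rw [← ENNReal.ofReal_mul (Real.rpow_nonneg hs.1.le _)]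
        congr 1
        rw [hK, hγ, hβ, hC]
        ring
      · rw [Set.indicator_of_notMem hs]
        have hzero : ∀ y : Fin n → ℝ, g (e.symm (s, y)) = 0 := by
          intro y
          rw [hcons, hgdef]
          refine Set.indicator_of_notMem (fun hc => ?_) _
          have h := cons_mem_simSet_iff.mp hc
          exact hs ⟨h.1, h.2.1⟩
        simp_rw [hzero, lintegral_zero]
    have h4 : ∫⁻ s : ℝ, ∫⁻ y : Fin n → ℝ, g (e.symm (s, y))
        = ∫⁻ s in Ioo (0:ℝ) t, ENNReal.ofReal (K * (s ^ α 0 * (t - s) ^ γ)) := by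
      simp_rw [hinner]
      exact lintegral_indicator measurableSet_Ioo _
    have hbi : IntegrableOn (fun s => K * (s ^ α 0 * (t - s) ^ γ)) (Ioo (0:ℝ) t) :=
      (beta_integrable (α 0) γ (hα 0) hγgt ht).const_mul K
    have h5 : ∫⁻ s in Ioo (0:ℝ) t, ENNReal.ofReal (K * (s ^ α 0 * (t - s) ^ γ))
        = ENNReal.ofReal (∫ s in Ioo (0:ℝ) t, K * (s ^ α 0 * (t - s) ^ γ)) := by
      rw [← ofReal_integral_eq_lintegral_ofReal hbi]
      filter_upwards [ae_restrict_mem measurableSet_Ioo] with s hsm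
      have h1' : (0:ℝ) ≤ s ^ α 0 := Real.rpow_nonneg hsm.1.le _
      have h2' : (0:ℝ) ≤ (t - s) ^ γ := Real.rpow_nonneg (by linarith [hsm.2]) _
      positivity
    have h6 : ∫ s in Ioo (0:ℝ) t, K * (s ^ α 0 * (t - s) ^ γ)
        = K * (Real.Gamma (α 0 + 1) * Real.Gamma (γ + 1) / Real.Gamma (α 0 + γ + 2)
            * t ^ (α 0 + γ + 1)) := by
      rw [integral_const_mul, beta_real_eq (α 0) γ (hα 0) hγgt ht]
    rw [h1, h2, h3, h4, h5, h6]
    congr 1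
    have hprod : ∏ i, Real.Gamma (α i + 1) = Real.Gamma (α 0 + 1) * C := by
      rw [hC, Fin.prod_univ_succ]
    have hsum : ∑ i, α i = α 0 + β := by
      rw [hβ, Fin.sum_univ_succ]
    have hΓγne : Real.Gamma (γ + 1) ≠ 0 := hΓγpos.ne'
    have hexp1 : α 0 + γ + 1 = α 0 + β + (n+1 : ℕ) := by rw [hγ]; push_cast; ring
    have hexp2 : α 0 + γ + 2 = α 0 + β + (n+1 : ℕ) + 1 := by rw [hγ]; push_cast; ring
    have hXpos : 0 < Real.Gamma (α 0 + γ + 2) := by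
      apply Real.Gamma_pos_of_pos
      have h0 := hα 0
      have hb := sum_gt hn α' hα'
      rw [hγ, hβ]
      linarith
    have hsimp : K * (Real.Gamma (α 0 + 1) * Real.Gamma (γ + 1) / Real.Gamma (α 0 + γ + 2)
        * t ^ (α 0 + γ + 1))
        = Real.Gamma (α 0 + 1) * C * t ^ (α 0 + γ + 1) / Real.Gamma (α 0 + γ + 2) := by
      rw [hK]
      field_simp
    rw [hsimp, hprod, hsum, hexp1, hexp2]

theorem stmt2 (n : ℕ) (hn : 0 < n) (α : Fin n → ℝ)
    (hα : ∀ i, α i ∈ Set.Ioo (-1 : ℝ) 1) (t : ℝ) (ht : 0 < t) :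
    (∫ r in {r : Fin n → ℝ |
        (∀ i, 0 < r i) ∧ (∀ i j : Fin n, i < j → r i < r j) ∧ (∀ i, r i < t)},
      ∏ i : Fin n,
        (r i - (if h : (i : ℕ) = 0 then 0
          else r ⟨(i : ℕ) - 1, Nat.lt_of_le_of_lt (Nat.sub_le _ _) i.isLt⟩)) ^ (α i))
      = (∏ i : Fin n, Real.Gamma (α i + 1)) * t ^ ((∑ i, α i) + n) /
          Real.Gamma ((∑ i, α i) + n + 1) := by
  have hα' : ∀ i, -1 < α i := fun i => (hα i).1
  have hkey := simKey n hn α hα' t ht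
  have hset : MeasurableSet (simSet n t) := simSet_measurable n t
  have hRHS : 0 ≤ (∏ i, Real.Gamma (α i + 1)) * t ^ ((∑ i, α i) + n) /
      Real.Gamma ((∑ i, α i) + n + 1) := by
    apply div_nonneg
    · apply mul_nonneg
      · exact le_of_lt (Finset.prod_pos fun i _ =>
          Real.Gamma_pos_of_pos (by linarith [hα' i]))
      · exact (Real.rpow_pos_of_pos ht _).le
    · exact (Real.Gamma_pos_of_pos (by have := sum_gt hn α hα'; linarith)).le
  have heq : (∫ r in simSet n t, simFun n α r)
      = (∏ i : Fin n, Real.Gamma (α i + 1)) * t ^ ((∑ i, α i) + n) /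
          Real.Gamma ((∑ i, α i) + n + 1) := by
    rw [MeasureTheory.integral_eq_lintegral_of_nonneg_ae
      (by filter_upwards [ae_restrict_mem hset] with r hr using (simFun_pos hr).le)
      ((simFun_measurable n α).aestronglyMeasurable), hkey, ENNReal.toReal_ofReal hRHS]
  exact heq
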